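/- Let m, n, r, d be integers with m, n ≥ 2, d ≥ 1 and 0 < r < min{m,n}, let a be an integer with 0 ≤ a ≤ rd, and define α := ⌊a/(n−r)⌋, s := a mod (n−r), β := ⌊(rd−a)/(m−r)⌋, t := (rd−a) mod (m−r). Then for P ∈ ℂ[λ]^{m×n}_d the following two conditions are equivalent (the first condition says exactly that P has the generic complete eigenstructure K_a, i.e., P ∈ orb(K_a)): (1) P has normal rank r, degree exactly d, no finite eigenvalues (rank P(λ₀) = r for all λ₀ ∈ ℂ), no eigenvalue at infinity with respect to grade d (the matrix of coefficients of λ^d of the entries of P has rank r), N_ℓ(P) has minimal indices β+1 (t times) and β (m−r−t times), and N_r(P) has minimal indices α+1 (s times) and α (n−r−s times); (2) P = L R, where L ∈ ℂ[λ]^{m×r} has columns forming a minimal basis, R ∈ ℂ[λ]^{r×n} has rows forming a minimal basis, N_ℓ(L) has minimal indices β+1 (t times) and β (m−r−t times), N_r(R) has minimal indices α+1 (s times) and α (n−r−s times), and deg(L_{*i}) + deg(R_{i*}) = d for i = 1,…,r. -/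

import Mathlib

open Polynomial Matrix

noncomputable section
set_option maxHeartbeats 1000000
set_option synthInstance.maxHeartbeats 400000

variable {F : Type*} [Field F]

/-- The matrix over the field of rational functions associated with a polynomial matrix. -/
def toRat {m n : ℕ} (P : Matrix (Fin m) (Fin n) F[X]) : Matrix (Fin m) (Fin n) (RatFunc F) :=
  P.map (algebraMap F[X] (RatFunc F))

/-- The normal rank of a polynomial matrix: its rank over the field of rational functions. -/
def normalRank {m n : ℕ} (P : Matrix (Fin m) (Fin n) F[X]) : ℕ := (toRat P).rank

/-- The degree of a polynomial matrix: the maximum of the degrees of its entries,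
`⊥` (i.e. -∞) for the zero matrix. -/
def matDeg {m n : ℕ} (P : Matrix (Fin m) (Fin n) F[X]) : WithBot ℕ :=
  Finset.univ.sup fun i : Fin m => Finset.univ.sup fun j : Fin n => (P i j).degree

/-- Degree of the i-th row. -/
def rowDeg {m n : ℕ} (P : Matrix (Fin m) (Fin n) F[X]) (i : Fin m) : WithBot ℕ :=
  Finset.univ.sup fun j : Fin n => (P i j).degree

/-- Degree of the j-th column. -/
def colDeg {m n : ℕ} (P : Matrix (Fin m) (Fin n) F[X]) (j : Fin n) : WithBot ℕ :=
  Finset.univ.sup fun i : Fin m => (P i j).degree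

/-- Degree of the i-th row as a natural number (0 for a zero row). -/
def rowDegNat {m n : ℕ} (P : Matrix (Fin m) (Fin n) F[X]) (i : Fin m) : ℕ :=
  Finset.univ.sup fun j : Fin n => (P i j).natDegree

/-- Degree of the j-th column as a natural number (0 for a zero column). -/
def colDegNat {m n : ℕ} (P : Matrix (Fin m) (Fin n) F[X]) (j : Fin n) : ℕ :=
  Finset.univ.sup fun i : Fin m => (P i j).natDegree

/-- Highest-row-degree coefficient matrix. -/
def hrMatrix {m n : ℕ} (P : Matrix (Fin m) (Fin n) F[X]) : Matrix (Fin m) (Fin n) F :=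
  Matrix.of fun i j => (P i j).coeff (rowDegNat P i)

/-- Highest-column-degree coefficient matrix. -/
def hcMatrix {m n : ℕ} (P : Matrix (Fin m) (Fin n) F[X]) : Matrix (Fin m) (Fin n) F :=
  Matrix.of fun i j => (P i j).coeff (colDegNat P j)

/-- A polynomial matrix is row reduced if its highest-row-degree coefficient matrix has
full row rank. -/
def RowReduced {m n : ℕ} (P : Matrix (Fin m) (Fin n) F[X]) : Prop := (hrMatrix P).rank = m

/-- A polynomial matrix is column reduced if its highest-column-degree coefficient matrix has
full column rank. -/
def ColReduced {m n : ℕ} (P : Matrix (Fin m) (Fin n) F[X]) : Prop := (hcMatrix P).rank = n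

/-- Evaluation of a polynomial matrix at a point of the algebraic closure. -/
def evalMat {m n : ℕ} (P : Matrix (Fin m) (Fin n) F[X]) (x : AlgebraicClosure F) :
    Matrix (Fin m) (Fin n) (AlgebraicClosure F) :=
  Matrix.of fun i j => aeval x (P i j)

/-- The rows of `P` form a minimal basis of the rational subspace they span (Forney's
characterization): full row rank at every point of the algebraic closure, and row reduced. -/
def IsMinimalRowBasis {m n : ℕ} (P : Matrix (Fin m) (Fin n) F[X]) : Prop :=
  (∀ x : AlgebraicClosure F, (evalMat P x).rank = m) ∧ RowReduced P

/-- The columns of `P` form a minimal basis of the rational subspace they span. -/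
def IsMinimalColBasis {m n : ℕ} (P : Matrix (Fin m) (Fin n) F[X]) : Prop :=
  (∀ x : AlgebraicClosure F, (evalMat P x).rank = n) ∧ ColReduced P

/-- The column space Col(P) over the field of rational functions. -/
def colSpace {m n : ℕ} (P : Matrix (Fin m) (Fin n) F[X]) :
    Submodule (RatFunc F) (Fin m → RatFunc F) :=
  LinearMap.range (toRat P).mulVecLin

/-- The row space Row(P) over the field of rational functions. -/
def rowSpace {m n : ℕ} (P : Matrix (Fin m) (Fin n) F[X]) :
    Submodule (RatFunc F) (Fin n → RatFunc F) :=
  LinearMap.range (toRat P)ᵀ.mulVecLin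

/-- The right nullspace N_r(P). -/
def rightNull {m n : ℕ} (P : Matrix (Fin m) (Fin n) F[X]) :
    Submodule (RatFunc F) (Fin n → RatFunc F) :=
  LinearMap.ker (toRat P).mulVecLin

/-- The left nullspace N_ℓ(P). -/
def leftNull {m n : ℕ} (P : Matrix (Fin m) (Fin n) F[X]) :
    Submodule (RatFunc F) (Fin m → RatFunc F) :=
  LinearMap.ker (toRat P)ᵀ.mulVecLin
/-- Minimal row basis over ℂ (Forney's characterization, with evaluation points in ℂ,
which is algebraically closed). -/
def IsMinimalRowBasisC {p n : ℕ} (M : Matrix (Fin p) (Fin n) ℂ[X]) : Prop :=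
  (∀ x : ℂ, (M.map (fun q => q.eval x)).rank = p) ∧ RowReduced M

/-- Minimal column basis over ℂ. -/
def IsMinimalColBasisC {m p : ℕ} (M : Matrix (Fin m) (Fin p) ℂ[X]) : Prop :=
  (∀ x : ℂ, (M.map (fun q => q.eval x)).rank = p) ∧ ColReduced M

/-- A rational subspace V has the multiset ms as its minimal indices: it admits a minimal
basis (arranged as the rows of a polynomial matrix) whose multiset of row degrees is ms. -/
def HasMinIndices {n : ℕ} (V : Submodule (RatFunc ℂ) (Fin n → RatFunc ℂ))
    (ms : Multiset ℕ) : Prop :=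
  ∃ (p : ℕ) (M : Matrix (Fin p) (Fin n) ℂ[X]), IsMinimalRowBasisC M ∧ rowSpace M = V ∧
    (Finset.univ.val.map fun i : Fin p => rowDegNat M i) = ms



section RankTool
variable {k : Type*} [Field k] {p q s : ℕ}

theorem rank_def (M : Matrix (Fin p) (Fin q) k) :
    M.rank = Module.finrank k (LinearMap.range M.mulVecLin) := rfl

theorem mulVecLin_inj {M : Matrix (Fin p) (Fin q) k} (h : M.rank = q) :
    Function.Injective M.mulVecLin := by
  rw [← LinearMap.ker_eq_bot]
  have := LinearMap.finrank_range_add_finrank_ker M.mulVecLin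
  rw [← rank_def, h] at this
  simp only [Module.finrank_fin_fun] at this
  have h0 : Module.finrank k (LinearMap.ker M.mulVecLin) = 0 := by omega
  exact Submodule.finrank_eq_zero.mp h0

theorem mulVec_eq_zero {M : Matrix (Fin p) (Fin q) k} (h : M.rank = q)
    {x : Fin q → k} (hx : M *ᵥ x = 0) : x = 0 := by
  have := mulVecLin_inj h (a₁ := x) (a₂ := 0)
  simpa [Matrix.mulVecLin_apply, hx] using this

theorem vecMul_eq_zero {M : Matrix (Fin p) (Fin q) k} (h : M.rank = p)
    {c : Fin p → k} (hc : c ᵥ* M = 0) : c = 0 := by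
  have ht : Mᵀ.rank = p := by rw [Matrix.rank_transpose]; exact h
  exact mulVec_eq_zero ht (by rwa [Matrix.mulVec_transpose])

theorem exists_vecMul_eq_zero {M : Matrix (Fin p) (Fin q) k} (h : M.rank < p) :
    ∃ c : Fin p → k, c ≠ 0 ∧ c ᵥ* M = 0 := by
  have ht : Mᵀ.rank < p := by rw [Matrix.rank_transpose]; exact h
  have := LinearMap.finrank_range_add_finrank_ker Mᵀ.mulVecLin
  rw [← rank_def] at this
  simp only [Module.finrank_fin_fun] at this
  have h0 : Module.finrank k (LinearMap.ker Mᵀ.mulVecLin) ≠ 0 := by omega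
  have : LinearMap.ker Mᵀ.mulVecLin ≠ ⊥ := by
    intro hbot; rw [hbot] at h0; simp at h0
  obtain ⟨x, hx, hx0⟩ := Submodule.exists_mem_ne_zero_of_ne_bot this
  exact ⟨x, hx0, by rw [← Matrix.mulVec_transpose]; exact hx⟩

theorem rank_mul_right_of_full_col {A : Matrix (Fin p) (Fin q) k}
    (hA : A.rank = q) (B : Matrix (Fin q) (Fin s) k) : (A * B).rank = B.rank := by
  rw [rank_def, rank_def, Matrix.mulVecLin_mul, LinearMap.range_comp]
  exact (Submodule.equivMapOfInjective _ (mulVecLin_inj hA) _).symm.finrank_eq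

theorem rank_mul_left_of_full_row {B : Matrix (Fin q) (Fin s) k}
    (hB : B.rank = q) (A : Matrix (Fin p) (Fin q) k) : (A * B).rank = A.rank := by
  rw [← Matrix.rank_transpose, Matrix.transpose_mul, ← Matrix.rank_transpose A]
  exact rank_mul_right_of_full_col (by rw [Matrix.rank_transpose]; exact hB) _

end RankTool



section Special
variable {F : Type*} [Field F] {p q : ℕ}

theorem algMap_inj : Function.Injective (algebraMap F[X] (RatFunc F)) :=
  RatFunc.algebraMap_injective F

theorem exists_poly_vec (c : Fin p → RatFunc F) :
    ∃ (c' : Fin p → F[X]) (q0 : F[X]), q0 ≠ 0 ∧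
      (∀ i, algebraMap F[X] (RatFunc F) (c' i) = algebraMap F[X] (RatFunc F) q0 * c i) := by
  classical
  refine ⟨fun i => (c i).num * ∏ k ∈ Finset.univ.erase i, (c k).denom,
    ∏ k, (c k).denom, Finset.prod_ne_zero_iff.mpr fun k _ => RatFunc.denom_ne_zero _, ?_⟩
  intro i
  have hnum : algebraMap F[X] (RatFunc F) (c i).num
      = c i * algebraMap F[X] (RatFunc F) (c i).denom := by
    have h := RatFunc.num_div_denom (c i)
    have hd : algebraMap F[X] (RatFunc F) (c i).denom ≠ 0 :=
      fun h0 => RatFunc.denom_ne_zero (c i) (algMap_inj (by simpa using h0))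
    rw [div_eq_iff hd] at h
    rw [h]
  rw [_root_.map_mul, hnum, ← Finset.mul_prod_erase Finset.univ (fun k => (c k).denom)
    (Finset.mem_univ i), _root_.map_mul]
  push_cast [map_prod]
  ring

theorem rank_toRat_of_eval_row (M : Matrix (Fin p) (Fin q) F[X]) (x : F)
    (h : (M.map (fun f => f.eval x)).rank = p) : (toRat M).rank = p := by
  classical
  have hle : (toRat M).rank ≤ p := by
    simpa using Matrix.rank_le_card_height (toRat M)
  rcases eq_or_lt_of_le hle with heq | hlt
  · exact heq
  exfalso
  obtain ⟨c, hc0, hc⟩ := exists_vecMul_eq_zero hlt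
  obtain ⟨c', q0, hq0, hcc⟩ := exists_poly_vec c
  have hc'M : c' ᵥ* M = 0 := by
    funext j
    apply algMap_inj
    have : algebraMap F[X] (RatFunc F) ((c' ᵥ* M) j)
        = algebraMap F[X] (RatFunc F) q0 * ((c ᵥ* toRat M) j) := by
      simp only [Matrix.vecMul, dotProduct, map_sum, _root_.map_mul, Finset.mul_sum]
      apply Finset.sum_congr rfl
      intro i _
      rw [hcc i]
      simp [toRat, Matrix.map_apply]
      ring
    rw [this, hc]
    simp
  have hc'0 : c' ≠ 0 := by
    intro h0
    apply hc0
    funext i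
    have := hcc i
    rw [h0] at this
    simp only [Pi.zero_apply, map_zero] at this
    have hq0' : algebraMap F[X] (RatFunc F) q0 ≠ 0 :=
      fun hh => hq0 (algMap_inj (by simpa using hh))
    rcases mul_eq_zero.mp this.symm with h' | h'
    · exact absurd h' hq0'
    · exact h'
  -- divide by (X - C x) ^ e
  have hne : (Finset.univ.filter (fun i => c' i ≠ 0)).Nonempty := by
    rcases Function.ne_iff.mp hc'0 with ⟨i, hi⟩
    simp only [Pi.zero_apply] at hi
    exact ⟨i, by simp [hi]⟩
  set s := Finset.univ.filter (fun i => c' i ≠ 0) with hs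
  set e := s.inf' hne (fun i => rootMultiplicity x (c' i)) with he
  have hdvd : ∀ i, (X - C x) ^ e ∣ c' i := by
    intro i
    by_cases hi : c' i = 0
    · rw [hi]; exact dvd_zero _
    · exact dvd_trans (pow_dvd_pow _ (Finset.inf'_le _ (by simp [hs, hi])))
        (Polynomial.pow_rootMultiplicity_dvd _ _)
  choose dd hdd using hdvd
  obtain ⟨i0, hi0mem, hi0⟩ := Finset.exists_mem_eq_inf' hne (fun i => rootMultiplicity x (c' i))
  have hi0ne : c' i0 ≠ 0 := by simpa [hs] using hi0mem
  have hd0 : (dd i0).eval x ≠ 0 := by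
    intro hev
    have : (X - C x) ^ (e + 1) ∣ c' i0 := by
      obtain ⟨u, hu⟩ := (Polynomial.dvd_iff_isRoot).mpr hev
      rw [hdd i0, hu]
      ring_nf
      exact ⟨u, by ring⟩
    have := (Polynomial.le_rootMultiplicity_iff hi0ne).mpr this
    omega
  have hdM : dd ᵥ* M = 0 := by
    funext j
    have h1 : ((X - C x) ^ e) * ((dd ᵥ* M) j) = 0 := by
      have : (c' ᵥ* M) j = ((X - C x) ^ e) * ((dd ᵥ* M) j) := by
        simp only [Matrix.vecMul, dotProduct, Finset.mul_sum]
        apply Finset.sum_congr rfl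
        intro i _
        rw [hdd i]; ring
      rw [← this, hc'M]; rfl
    rcases mul_eq_zero.mp h1 with h' | h'
    · exact absurd h' (pow_ne_zero _ (Polynomial.X_sub_C_ne_zero x))
    · exact h'
  have hev : (fun i => (dd i).eval x) ᵥ* (M.map (fun f => f.eval x)) = 0 := by
    funext j
    have := congrFun hdM j
    have h2 : Polynomial.eval x ((dd ᵥ* M) j) = 0 := by rw [this]; simp
    simp only [Matrix.vecMul, dotProduct, Polynomial.eval_finset_sum,
      Polynomial.eval_mul] at h2 ⊢
    simpa [Matrix.map_apply] using h2
  have := vecMul_eq_zero h hev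
  exact hd0 (by simpa using congrFun this i0)

theorem toRat_transpose (M : Matrix (Fin p) (Fin q) F[X]) : toRat Mᵀ = (toRat M)ᵀ := rfl

theorem rank_toRat_of_eval_col (M : Matrix (Fin p) (Fin q) F[X]) (x : F)
    (h : (M.map (fun f => f.eval x)).rank = q) : (toRat M).rank = q := by
  rw [← Matrix.rank_transpose, ← toRat_transpose]
  apply rank_toRat_of_eval_row Mᵀ x
  rw [show Mᵀ.map (fun f => f.eval x) = (M.map (fun f => f.eval x))ᵀ from rfl,
    Matrix.rank_transpose]
  exact h

end Special



section Minors
variable {k : Type*} [Field k] {p q : ℕ}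

theorem exists_det_ne_zero {M : Matrix (Fin p) (Fin q) k} (h : M.rank = p) :
    ∃ g : Fin p → Fin q, Function.Injective g ∧ (M.submatrix id g).det ≠ 0 := by
  classical
  have hspan : Submodule.span k (Set.range Mᵀ) = ⊤ := by
    apply Submodule.eq_top_of_finrank_eq
    rw [show Set.range Mᵀ = Set.range M.col from rfl, ← Matrix.rank_eq_finrank_span_cols, h, Module.finrank_fin_fun]
  obtain ⟨b, hsub, hspanb, hind⟩ := exists_linearIndependent k (Set.range Mᵀ)
  rw [hspan] at hspanb
  have hbfin : b.Finite := hind.setFinite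
  haveI : Fintype b := hbfin.fintype
  have hbasis : Module.Basis b k (Fin p → k) := Module.Basis.mk hind (by
    rw [Subtype.range_coe_subtype, Set.setOf_mem_eq, hspanb])
  have hcard : Fintype.card b = p := by
    have := Module.finrank_eq_card_basis hbasis
    rw [Module.finrank_fin_fun] at this; omega
  let e : Fin p ≃ b := (Fintype.equivFinOfCardEq hcard).symm
  have hpick : ∀ v : b, ∃ j : Fin q, Mᵀ j = (v : Fin p → k) := fun v => hsub v.2
  let pick : b → Fin q := fun v => (hpick v).choose
  have hpick' : ∀ v : b, Mᵀ (pick v) = (v : Fin p → k) := fun v => (hpick v).choose_spec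
  refine ⟨pick ∘ e, ?_, ?_⟩
  · intro a a' haa
    have : ((e a : b) : Fin p → k) = ((e a' : b) : Fin p → k) := by
      rw [← hpick' (e a), ← hpick' (e a')]; simp only [Function.comp] at haa; rw [haa]
    exact e.injective (Subtype.ext this)
  · intro hdet
    obtain ⟨v, hv0, hv⟩ := Matrix.exists_mulVec_eq_zero_iff.mpr hdet
    have hindf : LinearIndependent k fun j : Fin p => ((e j : b) : Fin p → k) :=
      hind.comp e e.injective
    have hsum : ∑ j, v j • ((e j : b) : Fin p → k) = 0 := by
      funext i
      have h1 := congrFun hv i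
      simp only [Matrix.mulVec, dotProduct, Matrix.submatrix_apply, id_eq,
        Pi.zero_apply] at h1
      rw [Finset.sum_apply]
      simp only [Pi.smul_apply, smul_eq_mul, Pi.zero_apply]
      rw [← h1]
      apply Finset.sum_congr rfl
      intro j _
      rw [← hpick' (e j)]
      simp [Function.comp, mul_comm, Matrix.transpose_apply]
    have := (Fintype.linearIndependent_iff.mp hindf) v hsum
    exact hv0 (funext this)

end Minors
section DegTool
variable {F : Type*} [Field F] {p q s : ℕ}

theorem degree_le_rowDeg (M : Matrix (Fin p) (Fin q) F[X]) (i : Fin p) (j : Fin q) :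
    (M i j).degree ≤ rowDeg M i :=
  Finset.le_sup (f := fun j => (M i j).degree) (Finset.mem_univ j)

theorem natDegree_le_rowDegNat (M : Matrix (Fin p) (Fin q) F[X]) (i : Fin p) (j : Fin q) :
    (M i j).natDegree ≤ rowDegNat M i :=
  Finset.le_sup (f := fun j => (M i j).natDegree) (Finset.mem_univ j)

theorem natDegree_le_colDegNat (M : Matrix (Fin p) (Fin q) F[X]) (i : Fin p) (j : Fin q) :
    (M i j).natDegree ≤ colDegNat M j :=
  Finset.le_sup (f := fun i => (M i j).natDegree) (Finset.mem_univ i)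

theorem degree_le_coe_rowDegNat (M : Matrix (Fin p) (Fin q) F[X]) (i : Fin p) (j : Fin q) :
    (M i j).degree ≤ (rowDegNat M i : WithBot ℕ) :=
  le_trans (Polynomial.degree_le_natDegree)
    (by exact_mod_cast natDegree_le_rowDegNat M i j)

theorem degree_le_coe_colDegNat (M : Matrix (Fin p) (Fin q) F[X]) (i : Fin p) (j : Fin q) :
    (M i j).degree ≤ (colDegNat M j : WithBot ℕ) :=
  le_trans (Polynomial.degree_le_natDegree)
    (by exact_mod_cast natDegree_le_colDegNat M i j)

theorem rowDeg_eq_coe {M : Matrix (Fin p) (Fin q) F[X]} {i : Fin p}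
    (h : ∃ j, M i j ≠ 0) : rowDeg M i = (rowDegNat M i : WithBot ℕ) := by
  apply le_antisymm
  · exact Finset.sup_le fun j _ => degree_le_coe_rowDegNat M i j
  · obtain ⟨j1, hj1⟩ := h
    obtain ⟨j0, _, hj0⟩ := Finset.exists_mem_eq_sup Finset.univ
      ⟨j1, Finset.mem_univ j1⟩ (fun j => (M i j).natDegree)
    by_cases h0 : M i j0 = 0
    · have : rowDegNat M i = 0 := by
        rw [rowDegNat, hj0, h0, Polynomial.natDegree_zero]
      rw [this]
      calc ((0:ℕ) : WithBot ℕ) = 0 := rfl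
        _ ≤ (M i j1).degree := Polynomial.zero_le_degree_iff.mpr hj1
        _ ≤ rowDeg M i := degree_le_rowDeg M i j1
    · calc ((rowDegNat M i : ℕ) : WithBot ℕ) = ((M i j0).natDegree : WithBot ℕ) := by
            rw [rowDegNat, hj0]
        _ = (M i j0).degree := (Polynomial.degree_eq_natDegree h0).symm
        _ ≤ rowDeg M i := degree_le_rowDeg M i j0

theorem colDeg_eq_rowDeg_transpose (M : Matrix (Fin p) (Fin q) F[X]) (j : Fin q) :
    colDeg M j = rowDeg Mᵀ j := rfl

theorem colDegNat_eq_rowDegNat_transpose (M : Matrix (Fin p) (Fin q) F[X]) (j : Fin q) :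
    colDegNat M j = rowDegNat Mᵀ j := rfl

theorem colDeg_eq_coe {M : Matrix (Fin p) (Fin q) F[X]} {j : Fin q}
    (h : ∃ i, M i j ≠ 0) : colDeg M j = (colDegNat M j : WithBot ℕ) :=
  rowDeg_eq_coe (M := Mᵀ) h

theorem hcMatrix_eq_transpose (M : Matrix (Fin p) (Fin q) F[X]) :
    hcMatrix M = (hrMatrix Mᵀ)ᵀ := rfl

theorem coeff_mul_of_degree_le {f g : F[X]} {a b : ℕ} (hf : f.degree ≤ (a : WithBot ℕ))
    (hg : g.degree ≤ (b : WithBot ℕ)) :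
    (f * g).coeff (a + b) = f.coeff a * g.coeff b := by
  rw [Polynomial.coeff_mul]
  apply Finset.sum_eq_single (a, b)
  · rintro ⟨u, v⟩ hmem hne
    rw [Finset.HasAntidiagonal.mem_antidiagonal] at hmem
    rcases lt_or_ge a u with hu | hu
    · rw [Polynomial.coeff_eq_zero_of_degree_lt (lt_of_le_of_lt hf (by exact_mod_cast hu)),
        zero_mul]
    · rcases eq_or_lt_of_le hu with he | hlt
      · exfalso; apply hne; simp at hmem ⊢; omega
      · have hv : b < v := by omega
        rw [Polynomial.coeff_eq_zero_of_degree_lt (lt_of_le_of_lt hg (by exact_mod_cast hv)),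
          mul_zero]
  · intro h
    exact absurd (Finset.HasAntidiagonal.mem_antidiagonal (n := a + b) (a := ((a : ℕ), (b : ℕ))) |>.mpr rfl) h

end DegTool

section SpaceTool
variable {p q s : ℕ}

theorem toRat_mul {F : Type*} [Field F] (A : Matrix (Fin p) (Fin q) F[X])
    (B : Matrix (Fin q) (Fin s) F[X]) : toRat (A * B) = toRat A * toRat B :=
  Matrix.map_mul (f := algebraMap F[X] (RatFunc F))

theorem toRat_inj {F : Type*} [Field F] {A B : Matrix (Fin p) (Fin q) F[X]}
    (h : toRat A = toRat B) : A = B :=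
  Matrix.ext fun i j => algMap_inj (congrFun (congrFun h i) j)

theorem mem_rightNull_iff {M : Matrix (Fin p) (Fin q) ℂ[X]} {x : Fin q → RatFunc ℂ} :
    x ∈ rightNull M ↔ toRat M *ᵥ x = 0 := by
  rw [rightNull, LinearMap.mem_ker, Matrix.mulVecLin_apply]

theorem mem_leftNull_iff {M : Matrix (Fin p) (Fin q) ℂ[X]} {y : Fin p → RatFunc ℂ} :
    y ∈ leftNull M ↔ y ᵥ* toRat M = 0 := by
  rw [leftNull, LinearMap.mem_ker, Matrix.mulVecLin_apply, Matrix.mulVec_transpose]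

theorem row_mem_rowSpace (M : Matrix (Fin p) (Fin q) ℂ[X]) (i : Fin p) :
    (toRat M) i ∈ rowSpace M := by
  refine ⟨Pi.single i 1, ?_⟩
  funext j
  simp [Matrix.mulVecLin_apply, Matrix.mulVec, dotProduct, Pi.single_apply]

theorem mulVec_eq_zero_iff_rowSpace {M : Matrix (Fin p) (Fin q) ℂ[X]} {x : Fin q → RatFunc ℂ} :
    toRat M *ᵥ x = 0 ↔ ∀ v ∈ rowSpace M, ∑ j, v j * x j = 0 := by
  constructor
  · rintro h v ⟨w, rfl⟩
    have hv : ∀ j, (toRat M)ᵀ.mulVecLin w j = ∑ i, w i * toRat M i j := by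
      intro j
      rw [Matrix.mulVecLin_apply, Matrix.mulVec_transpose]
      simp [Matrix.vecMul, dotProduct]
    have hMx : ∀ i, ∑ j, toRat M i j * x j = 0 := by
      intro i
      simpa [Matrix.mulVec, dotProduct] using congrFun h i
    calc ∑ j, (toRat M)ᵀ.mulVecLin w j * x j
        = ∑ j, ∑ i, w i * toRat M i j * x j := by
          refine Finset.sum_congr rfl fun j _ => ?_
          rw [hv j, Finset.sum_mul]
      _ = ∑ i, w i * ∑ j, toRat M i j * x j := by
          rw [Finset.sum_comm]
          refine Finset.sum_congr rfl fun i _ => ?_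
          rw [Finset.mul_sum]
          exact Finset.sum_congr rfl fun j _ => by ring
      _ = 0 := Finset.sum_eq_zero fun i _ => by rw [hMx i, mul_zero]
  · intro h
    funext i
    have := h _ (row_mem_rowSpace M i)
    simpa [Matrix.mulVec, dotProduct] using this

theorem rightNull_eq_of_rowSpace_eq {A : Matrix (Fin p) (Fin q) ℂ[X]}
    {B : Matrix (Fin s) (Fin q) ℂ[X]} (h : rowSpace A = rowSpace B) :
    rightNull A = rightNull B := by
  ext x
  rw [mem_rightNull_iff, mem_rightNull_iff, mulVec_eq_zero_iff_rowSpace,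
    mulVec_eq_zero_iff_rowSpace, h]

theorem leftNull_mul_right {L : Matrix (Fin p) (Fin q) ℂ[X]}
    {R : Matrix (Fin q) (Fin s) ℂ[X]} (hR : (toRat R).rank = q) :
    leftNull (L * R) = leftNull L := by
  ext y
  rw [mem_leftNull_iff, mem_leftNull_iff, toRat_mul, ← Matrix.vecMul_vecMul]
  constructor
  · intro h
    exact vecMul_eq_zero hR h
  · intro h
    rw [h]
    funext j; simp [Matrix.vecMul, dotProduct]

theorem rightNull_mul_left {L : Matrix (Fin p) (Fin q) ℂ[X]}
    {R : Matrix (Fin q) (Fin s) ℂ[X]} (hL : (toRat L).rank = q) :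
    rightNull (L * R) = rightNull R := by
  ext x
  rw [mem_rightNull_iff, mem_rightNull_iff, toRat_mul, ← Matrix.mulVec_mulVec]
  constructor
  · intro h
    exact mulVec_eq_zero hL h
  · intro h
    rw [h]
    funext j; simp [Matrix.mulVec, dotProduct]

end SpaceTool

section PDP

theorem vecMul_eq_sum' {p q : ℕ} {k : Type*} [Field k] (γ : Fin p → k)
    (M : Matrix (Fin p) (Fin q) k) : γ ᵥ* M = ∑ i, γ i • M i := by
  funext j
  simp [Matrix.vecMul, dotProduct, Finset.sum_apply]

theorem predictable_degree {m r n : ℕ} {R : Matrix (Fin r) (Fin n) ℂ[X]}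
    (hRR : RowReduced R) (Y : Matrix (Fin m) (Fin r) ℂ[X]) (k : Fin m) (D : ℕ)
    (h : ∀ j, ((Y * R) k j).degree ≤ (D : WithBot ℕ)) :
    ∀ i, Y k i ≠ 0 → (Y k i).natDegree + rowDegNat R i ≤ D := by
  classical
  by_contra hcon
  push_neg at hcon
  obtain ⟨i1, hi1, hDlt⟩ := hcon
  set S := Finset.univ.filter (fun i : Fin r => Y k i ≠ 0) with hS
  have hSne : S.Nonempty := ⟨i1, by simp [hS, hi1]⟩
  set D' := S.sup' hSne (fun i => (Y k i).natDegree + rowDegNat R i) with hD'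
  have hi1S : i1 ∈ S := by simp [hS, hi1]
  have hDD' : D < D' := lt_of_lt_of_le hDlt (Finset.le_sup' (f := fun i => (Y k i).natDegree + rowDegNat R i) hi1S)
  set c : Fin r → ℂ := fun i => (Y k i).coeff (D' - rowDegNat R i) with hc
  have claim1 : ∀ i j, (Y k i * R i j).coeff D' = c i * hrMatrix R i j := by
    intro i j
    by_cases hYk : Y k i = 0
    · simp [hYk, hc, Polynomial.coeff_zero]
    · have hmem : i ∈ S := by simp [hS, hYk]
      have hle : (Y k i).natDegree + rowDegNat R i ≤ D' :=
        Finset.le_sup' (f := fun i => (Y k i).natDegree + rowDegNat R i) hmem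
      have hρ : rowDegNat R i ≤ D' := by omega
      have hD'eq : (D' - rowDegNat R i) + rowDegNat R i = D' := by omega
      have hdegY : (Y k i).degree ≤ ((D' - rowDegNat R i : ℕ) : WithBot ℕ) :=
        le_trans Polynomial.degree_le_natDegree (by exact_mod_cast by omega)
      have hdegR : (R i j).degree ≤ ((rowDegNat R i : ℕ) : WithBot ℕ) :=
        degree_le_coe_rowDegNat R i j
      rw [← hD'eq, coeff_mul_of_degree_le hdegY hdegR]
      rfl
  have claim2 : c ᵥ* hrMatrix R = 0 := by
    funext j
    have hmul : ((Y * R) k j).coeff D' = ∑ i, (Y k i * R i j).coeff D' := by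
      rw [Matrix.mul_apply, Polynomial.finset_sum_coeff]
    have hzero : ((Y * R) k j).coeff D' = 0 :=
      Polynomial.coeff_eq_zero_of_degree_lt (lt_of_le_of_lt (h j) (by exact_mod_cast hDD'))
    have : ∑ i, c i * hrMatrix R i j = 0 := by
      rw [← Finset.sum_congr rfl (fun i _ => claim1 i j), ← hmul, hzero]
    simpa [Matrix.vecMul, dotProduct] using this
  have hc0 : c = 0 := vecMul_eq_zero hRR claim2
  obtain ⟨i0, hi0mem, hi0⟩ := Finset.exists_mem_eq_sup' hSne
    (fun i => (Y k i).natDegree + rowDegNat R i)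
  have hYi0 : Y k i0 ≠ 0 := by simpa [hS] using hi0mem
  have hD'i0 : D' = (Y k i0).natDegree + rowDegNat R i0 := by rw [hD', hi0]
  have hfin : c i0 = (Y k i0).leadingCoeff := by
    show (Y k i0).coeff (D' - rowDegNat R i0) = _
    have hsub : D' - rowDegNat R i0 = (Y k i0).natDegree := by omega
    rw [hsub]
    exact Polynomial.coeff_natDegree
  rw [hc0] at hfin
  exact hYi0 (Polynomial.leadingCoeff_eq_zero.mp hfin.symm)

end PDP

section RightInv

theorem exists_right_inverse {r n : ℕ} {R : Matrix (Fin r) (Fin n) ℂ[X]}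
    (h : ∀ x : ℂ, (R.map (fun f => f.eval x)).rank = r) :
    ∃ Xi : Matrix (Fin n) (Fin r) ℂ[X], R * Xi = 1 := by
  classical
  set Δ : (Fin r → Fin n) → ℂ[X] := fun g => (R.submatrix id g).det with hΔ
  have hdet_eval : ∀ (g : Fin r → Fin n) (x : ℂ),
      (Δ g).eval x = ((R.map (fun f => f.eval x)).submatrix id g).det := by
    intro g x
    have : (R.map (fun f => f.eval x)).submatrix id g
        = (R.submatrix id g).map (fun f => f.eval x) := rfl
    rw [this, hΔ]
    exact (RingHom.map_det (Polynomial.evalRingHom x) (R.submatrix id g)).trans rfl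
  have hspan : Ideal.span (Set.range Δ) = ⊤ := by
    by_contra hne
    have hprin : Submodule.IsPrincipal (Ideal.span (Set.range Δ)) :=
      IsPrincipalIdealRing.principal _
    set g0 := Submodule.IsPrincipal.generator (Ideal.span (Set.range Δ)) with hg0
    have hg0span : Ideal.span {g0} = Ideal.span (Set.range Δ) :=
      Ideal.span_singleton_generator _
    have hg0nu : ¬IsUnit g0 := by
      intro hu
      exact hne (by rw [← hg0span]; exact Ideal.span_singleton_eq_top.mpr hu)
    have hzero : ∃ x0 : ℂ, ∀ g, (Δ g).eval x0 = 0 := by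
      by_cases hg00 : g0 = 0
      · refine ⟨0, fun g => ?_⟩
        have : Δ g ∈ Ideal.span {g0} := by
          rw [hg0span]; exact Ideal.subset_span ⟨g, rfl⟩
        rw [Ideal.mem_span_singleton, hg00] at this
        rw [zero_dvd_iff.mp this]
        simp
      · have hdeg : g0.degree ≠ 0 := by
          intro hd
          exact hg0nu (Polynomial.isUnit_iff_degree_eq_zero.mpr hd)
        obtain ⟨x0, hx0⟩ := IsAlgClosed.exists_root g0 hdeg
        refine ⟨x0, fun g => ?_⟩
        have : Δ g ∈ Ideal.span {g0} := by
          rw [hg0span]; exact Ideal.subset_span ⟨g, rfl⟩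
        rw [Ideal.mem_span_singleton] at this
        obtain ⟨t, ht⟩ := this
        rw [ht, Polynomial.eval_mul, Polynomial.IsRoot.def.mp hx0, zero_mul]
    obtain ⟨x0, hx0⟩ := hzero
    obtain ⟨g, hginj, hgdet⟩ := exists_det_ne_zero (h x0)
    exact hgdet (by rw [← hdet_eval g x0, hx0 g])
  have hone : (1 : ℂ[X]) ∈ Submodule.span ℂ[X] (Set.range Δ) := by
    rw [show Submodule.span ℂ[X] (Set.range Δ) = Ideal.span (Set.range Δ) from rfl, hspan]
    trivial
  rw [Submodule.mem_span_range_iff_exists_fun] at hone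
  obtain ⟨cc, hcc⟩ := hone
  set E : (Fin r → Fin n) → Matrix (Fin n) (Fin r) ℂ[X] :=
    fun g => Matrix.of (fun j i => if g i = j then 1 else 0) with hE
  have hRE : ∀ g, R * E g = R.submatrix id g := by
    intro g
    refine Matrix.ext fun k i => ?_
    simp only [Matrix.mul_apply, hE, Matrix.of_apply, mul_ite, mul_one, mul_zero,
      Matrix.submatrix_apply, id_eq]
    rw [Finset.sum_ite_eq Finset.univ (g i) (fun j => R k j)]
    simp
  refine ⟨∑ g, cc g • (E g * (R.submatrix id g).adjugate), ?_⟩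
  rw [Matrix.mul_sum]
  have : ∀ g : Fin r → Fin n, R * (cc g • (E g * (R.submatrix id g).adjugate))
      = (cc g * Δ g) • (1 : Matrix (Fin r) (Fin r) ℂ[X]) := by
    intro g
    rw [Matrix.mul_smul, ← Matrix.mul_assoc, hRE g, Matrix.mul_adjugate, smul_smul]
  simp only [smul_eq_mul] at hcc
  rw [Finset.sum_congr rfl (fun g _ => this g), ← Finset.sum_smul, hcc, one_smul]

end RightInv

section MinBasisExist

theorem rowSpace_eq_span {p q : ℕ} (M : Matrix (Fin p) (Fin q) ℂ[X]) :
    rowSpace M = Submodule.span (RatFunc ℂ) (Set.range (toRat M)) := by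
  rw [rowSpace, Matrix.range_mulVecLin]; rfl

theorem finrank_rowSpace {p q : ℕ} (M : Matrix (Fin p) (Fin q) ℂ[X]) :
    Module.finrank (RatFunc ℂ) (rowSpace M) = (toRat M).rank := by
  rw [← Matrix.rank_transpose]
  rfl

theorem toRat_updateRow {p q : ℕ} (B : Matrix (Fin p) (Fin q) ℂ[X]) (i : Fin p)
    (v : Fin q → ℂ[X]) :
    toRat (B.updateRow i v)
      = (toRat B).updateRow i (fun j => algebraMap ℂ[X] (RatFunc ℂ) (v j)) := by
  refine Matrix.ext fun k j => ?_
  by_cases hk : k = i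
  · subst hk; simp [toRat, Matrix.map_apply, Matrix.updateRow_self]
  · simp [toRat, Matrix.map_apply, Matrix.updateRow_ne hk]

theorem rowSpace_updateRow {p q : ℕ} (B : Matrix (Fin p) (Fin q) ℂ[X]) (i : Fin p)
    (v : Fin q → ℂ[X]) (γ : Fin p → RatFunc ℂ) (hγ : γ i ≠ 0)
    (hv : (fun j => algebraMap ℂ[X] (RatFunc ℂ) (v j)) = ∑ k, γ k • toRat B k) :
    rowSpace (B.updateRow i v) = rowSpace B := by
  classical
  rw [rowSpace_eq_span, rowSpace_eq_span, toRat_updateRow]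
  set u : Fin q → RatFunc ℂ := fun j => algebraMap ℂ[X] (RatFunc ℂ) (v j) with hu
  have hrowi : (toRat B).updateRow i u i = u := Matrix.updateRow_self
  have hrowk : ∀ k, k ≠ i → (toRat B).updateRow i u k = toRat B k :=
    fun k hk => Matrix.updateRow_ne hk
  apply le_antisymm
  · rw [Submodule.span_le]
    rintro x ⟨k, rfl⟩
    by_cases hk : k = i
    · rw [hk, hrowi, hv]
      exact Submodule.sum_mem _ fun k _ =>
        Submodule.smul_mem _ _ (Submodule.subset_span ⟨k, rfl⟩)
    · rw [hrowk k hk]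
      exact Submodule.subset_span ⟨k, rfl⟩
  · rw [Submodule.span_le]
    rintro x ⟨k, rfl⟩
    by_cases hk : k = i
    · rw [hk]
      have hsum : u = γ i • toRat B i + ∑ k ∈ Finset.univ.erase i, γ k • toRat B k := by
        rw [hv, ← Finset.add_sum_erase _ _ (Finset.mem_univ i)]
      have hBi : toRat B i
          = (γ i)⁻¹ • (u - ∑ k ∈ Finset.univ.erase i, γ k • toRat B k) := by
        rw [hsum]
        rw [add_sub_cancel_right, smul_smul, inv_mul_cancel₀ hγ, one_smul]
      rw [hBi]
      apply Submodule.smul_mem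
      apply Submodule.sub_mem
      · exact Submodule.subset_span ⟨i, hrowi⟩
      · apply Submodule.sum_mem
        intro k hk
        have hki : k ≠ i := Finset.ne_of_mem_erase hk
        exact Submodule.smul_mem _ _ (Submodule.subset_span ⟨k, hrowk k hki⟩)
    · exact Submodule.subset_span ⟨k, hrowk k hk⟩

theorem span_range_smul_eq {q : ℕ} {ι : Type*} (v : ι → (Fin q → RatFunc ℂ))
    (a : ι → RatFunc ℂ) (ha : ∀ i, a i ≠ 0) :
    Submodule.span (RatFunc ℂ) (Set.range fun i => a i • v i)
      = Submodule.span (RatFunc ℂ) (Set.range v) := by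
  apply le_antisymm <;> rw [Submodule.span_le] <;> rintro x ⟨k, rfl⟩
  · exact Submodule.smul_mem _ _ (Submodule.subset_span ⟨k, rfl⟩)
  · have hvk : v k = (a k)⁻¹ • (a k • v k) := by
      rw [smul_smul, inv_mul_cancel₀ (ha k), one_smul]
    rw [hvk]
    exact Submodule.smul_mem _ _ (Submodule.subset_span ⟨k, rfl⟩)

theorem exists_poly_rowSpace {r n : ℕ} (V : Submodule (RatFunc ℂ) (Fin n → RatFunc ℂ))
    (hV : Module.finrank (RatFunc ℂ) V = r) :
    ∃ B : Matrix (Fin r) (Fin n) ℂ[X], rowSpace B = V := by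
  have b : Module.Basis (Fin r) (RatFunc ℂ) V := Module.finBasisOfFinrankEq _ _ hV
  set v : Fin r → (Fin n → RatFunc ℂ) := fun k => (b k : Fin n → RatFunc ℂ) with hv
  have hspanv : Submodule.span (RatFunc ℂ) (Set.range v) = V := by
    have hb := b.span_eq
    have h2 : Set.range v = (V.subtype) '' (Set.range b) := by
      rw [← Set.range_comp]; rfl
    rw [h2, ← Submodule.map_span, hb, Submodule.map_subtype_top]
  choose rows q0 hq0 hrows using fun k => exists_poly_vec (v k)
  refine ⟨Matrix.of (fun k j => rows k j), ?_⟩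
  rw [rowSpace_eq_span]
  have hfun : toRat (Matrix.of fun k j => rows k j)
      = (fun k => (algebraMap ℂ[X] (RatFunc ℂ) (q0 k)) • v k) := by
    funext k j
    simp only [toRat, Matrix.map_apply, Matrix.of_apply, Pi.smul_apply, smul_eq_mul]
    exact hrows k j
  rw [hfun, span_range_smul_eq _ _
    (fun k => (map_ne_zero_iff _ algMap_inj).mpr (hq0 k)), hspanv]

theorem exists_minimal_row_basis {r n : ℕ} (V : Submodule (RatFunc ℂ) (Fin n → RatFunc ℂ))
    (hV : Module.finrank (RatFunc ℂ) V = r) :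
    ∃ R : Matrix (Fin r) (Fin n) ℂ[X], IsMinimalRowBasisC R ∧ rowSpace R = V := by
  classical
  obtain ⟨B0, hB0⟩ := exists_poly_rowSpace V hV
  suffices H : ∀ N (B : Matrix (Fin r) (Fin n) ℂ[X]), (∑ i, rowDegNat B i) ≤ N →
      rowSpace B = V → ∃ R, IsMinimalRowBasisC R ∧ rowSpace R = V from
    H _ B0 le_rfl hB0
  intro N
  induction N using Nat.strong_induction_on with
  | _ N IH =>
  intro B hBN hBV
  by_cases hmin : IsMinimalRowBasisC B
  · exact ⟨B, hmin, hBV⟩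
  have hrk : (toRat B).rank = r := by
    rw [← finrank_rowSpace B, hBV]; exact hV
  have hcomb : ∀ γ : Fin r → RatFunc ℂ, γ ≠ 0 → ∑ k, γ k • toRat B k ≠ 0 := by
    intro γ hγ hz
    apply hγ
    apply vecMul_eq_zero hrk
    rw [vecMul_eq_sum']
    exact hz
  set δ : Fin r → ℕ := rowDegNat B with hδ
  have key : ∃ (i : Fin r) (w : Fin n → ℂ[X]) (γ : Fin r → RatFunc ℂ), γ i ≠ 0 ∧
      ((fun j => algebraMap ℂ[X] (RatFunc ℂ) (w j)) = ∑ k, γ k • toRat B k) ∧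
      (1 ≤ δ i) ∧ (∀ j, (w j).natDegree ≤ δ i - 1) := by
    rw [IsMinimalRowBasisC, not_and_or] at hmin
    have getc : ∀ (M : Matrix (Fin r) (Fin n) ℂ), M.rank ≠ r →
        ∃ c : Fin r → ℂ, c ≠ 0 ∧ c ᵥ* M = 0 := by
      intro M hM
      apply exists_vecMul_eq_zero
      exact lt_of_le_of_ne (by simpa using Matrix.rank_le_card_height M) hM
    rcases hmin with hev | hrr
    · -- some eval not full rank
      obtain ⟨x0, hx0⟩ := not_forall.mp hev
      obtain ⟨c, hc0, hc⟩ := getc _ hx0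
      obtain ⟨i1, hi1⟩ := Function.ne_iff.mp hc0
      simp only [Pi.zero_apply] at hi1
      set S := Finset.univ.filter (fun k => c k ≠ 0) with hS
      obtain ⟨i, hiS, hmax⟩ := Finset.exists_max_image S δ ⟨i1, by simp [hS, hi1]⟩
      have hci : c i ≠ 0 := by simpa [hS] using hiS
      set w0 : Fin n → ℂ[X] := fun j => ∑ k, Polynomial.C (c k) * B k j with hw0
      set γA : Fin r → RatFunc ℂ :=
        fun k => algebraMap ℂ[X] (RatFunc ℂ) (Polynomial.C (c k)) with hγA
      have hw0alg : (fun j => algebraMap ℂ[X] (RatFunc ℂ) (w0 j))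
          = ∑ k, γA k • toRat B k := by
        funext j
        rw [Finset.sum_apply]
        simp only [hw0, map_sum, _root_.map_mul, Pi.smul_apply, smul_eq_mul]
        exact Finset.sum_congr rfl fun k _ => rfl
      have hγ0 : γA i ≠ 0 := by
        simp only [hγA, ne_eq, map_eq_zero_iff _ algMap_inj, Polynomial.C_eq_zero]
        exact hci
      have hw0ne : w0 ≠ 0 := by
        intro h0
        refine hcomb γA (fun hz => hγ0 ((congrFun hz i).trans rfl)) ?_
        rw [← hw0alg, h0]
        funext j; simp
      have hw0deg : ∀ j, (w0 j).natDegree ≤ δ i := by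
        intro j
        apply Polynomial.natDegree_sum_le_of_forall_le
        intro k _
        by_cases hck : c k = 0
        · simp [hck]
        · calc (Polynomial.C (c k) * B k j).natDegree
              ≤ (Polynomial.C (c k)).natDegree + (B k j).natDegree :=
                Polynomial.natDegree_mul_le
            _ ≤ δ k := by
                rw [Polynomial.natDegree_C, zero_add]
                exact natDegree_le_rowDegNat B k j
            _ ≤ δ i := hmax k (by simp [hS, hck])
      have hroot : ∀ j, (w0 j).eval x0 = 0 := by
        intro j
        have := congrFun hc j
        simp only [Matrix.vecMul, dotProduct, Matrix.map_apply, Pi.zero_apply] at this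
        simp only [hw0, Polynomial.eval_finset_sum, Polynomial.eval_mul, Polynomial.eval_C]
        exact this
      have hdvd : ∀ j, (Polynomial.X - Polynomial.C x0) ∣ w0 j :=
        fun j => Polynomial.dvd_iff_isRoot.mpr (hroot j)
      choose u hu using hdvd
      have hXne : (Polynomial.X - Polynomial.C x0) ≠ (0 : ℂ[X]) :=
        Polynomial.X_sub_C_ne_zero x0
      have hune : u ≠ 0 := by
        intro h0
        apply hw0ne
        funext j
        rw [hu j, congrFun h0 j]
        simp
      obtain ⟨j1, hj1⟩ := Function.ne_iff.mp hune
      simp only [Pi.zero_apply] at hj1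
      have hδi1 : 1 ≤ δ i := by
        have h1 : (w0 j1).natDegree = 1 + (u j1).natDegree := by
          rw [hu j1, Polynomial.natDegree_mul hXne hj1, Polynomial.natDegree_X_sub_C]
        have := hw0deg j1
        omega
      refine ⟨i, u, fun k => γA k
        * (algebraMap ℂ[X] (RatFunc ℂ) (Polynomial.X - Polynomial.C x0))⁻¹, ?_, ?_, hδi1, ?_⟩
      · apply mul_ne_zero hγ0
        exact inv_ne_zero ((map_ne_zero_iff _ algMap_inj).mpr hXne)
      · funext j
        have halgX : algebraMap ℂ[X] (RatFunc ℂ) (Polynomial.X - Polynomial.C x0) ≠ 0 :=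
          (map_ne_zero_iff _ algMap_inj).mpr hXne
        have h1 : algebraMap ℂ[X] (RatFunc ℂ) (u j)
            = (algebraMap ℂ[X] (RatFunc ℂ) (Polynomial.X - Polynomial.C x0))⁻¹
              * algebraMap ℂ[X] (RatFunc ℂ) (w0 j) := by
          rw [hu j, _root_.map_mul, ← mul_assoc, inv_mul_cancel₀ halgX, one_mul]
        rw [h1]
        have h2 := congrFun hw0alg j
        rw [h2, Finset.sum_apply, Finset.mul_sum, Finset.sum_apply]
        refine Finset.sum_congr rfl fun k _ => ?_
        simp only [Pi.smul_apply, smul_eq_mul]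
        ring
      · intro j
        by_cases huj : u j = 0
        · rw [huj, Polynomial.natDegree_zero]; omega
        · have h1 : (w0 j).natDegree = 1 + (u j).natDegree := by
            rw [hu j, Polynomial.natDegree_mul hXne huj, Polynomial.natDegree_X_sub_C]
          have := hw0deg j
          omega
    · -- not row reduced
      obtain ⟨c, hc0, hc⟩ := getc _ hrr
      obtain ⟨i1, hi1⟩ := Function.ne_iff.mp hc0
      simp only [Pi.zero_apply] at hi1
      set S := Finset.univ.filter (fun k => c k ≠ 0) with hS
      obtain ⟨i, hiS, hmax⟩ := Finset.exists_max_image S δ ⟨i1, by simp [hS, hi1]⟩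
      have hci : c i ≠ 0 := by simpa [hS] using hiS
      set w : Fin n → ℂ[X] :=
        fun j => ∑ k, Polynomial.C (c k) * Polynomial.X ^ (δ i - δ k) * B k j with hw
      set γ : Fin r → RatFunc ℂ :=
        fun k => algebraMap ℂ[X] (RatFunc ℂ)
          (Polynomial.C (c k) * Polynomial.X ^ (δ i - δ k)) with hγdef
      have hγi : γ i ≠ 0 := by
        show algebraMap ℂ[X] (RatFunc ℂ)
          (Polynomial.C (c i) * Polynomial.X ^ (δ i - δ i)) ≠ 0
        rw [ne_eq, map_eq_zero_iff _ algMap_inj]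
        exact mul_ne_zero (Polynomial.C_ne_zero.mpr hci)
          (pow_ne_zero _ Polynomial.X_ne_zero)
      have hwalg : (fun j => algebraMap ℂ[X] (RatFunc ℂ) (w j)) = ∑ k, γ k • toRat B k := by
        funext j
        rw [Finset.sum_apply]
        simp only [hw, map_sum, _root_.map_mul, hγdef, Pi.smul_apply, smul_eq_mul]
        exact Finset.sum_congr rfl fun k _ => rfl
      have hwne : w ≠ 0 := by
        intro h0
        apply hcomb γ (fun hz => hγi ((congrFun hz i).trans rfl))
        rw [← hwalg, h0]
        funext j; simp
      have hwdeg : ∀ j, (w j).natDegree ≤ δ i := by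
        intro j
        apply Polynomial.natDegree_sum_le_of_forall_le
        intro k _
        by_cases hck : c k = 0
        · simp [hck]
        · have hkS : k ∈ S := by simp [hS, hck]
          have hδk : δ k ≤ δ i := hmax k hkS
          calc (Polynomial.C (c k) * Polynomial.X ^ (δ i - δ k) * B k j).natDegree
              ≤ (Polynomial.C (c k) * Polynomial.X ^ (δ i - δ k)).natDegree
                  + (B k j).natDegree := Polynomial.natDegree_mul_le
            _ ≤ ((Polynomial.C (c k)).natDegree
                  + (Polynomial.X ^ (δ i - δ k) : ℂ[X]).natDegree) + (B k j).natDegree := by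
                exact Nat.add_le_add_right Polynomial.natDegree_mul_le _
            _ ≤ (0 + (δ i - δ k)) + δ k := by
                apply add_le_add
                · rw [Polynomial.natDegree_C, Polynomial.natDegree_X_pow]
                · exact natDegree_le_rowDegNat B k j
            _ ≤ δ i := by omega
      have hcoeff : ∀ j, (w j).coeff (δ i) = 0 := by
        intro j
        rw [hw]
        rw [Polynomial.finset_sum_coeff]
        have hterm : ∀ k, (Polynomial.C (c k) * Polynomial.X ^ (δ i - δ k) * B k j).coeff (δ i)
            = c k * hrMatrix B k j := by
          intro k
          by_cases hck : c k = 0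
          · simp [hck]
          · have hδk : δ k ≤ δ i := hmax k (by simp [hS, hck])
            rw [mul_assoc, Polynomial.coeff_C_mul]
            congr 1
            set e := δ i - δ k with he
            have hsplit : δ i = δ k + e := by omega
            rw [hsplit, Polynomial.coeff_X_pow_mul]
            rfl
        rw [Finset.sum_congr rfl fun k _ => hterm k]
        have := congrFun hc j
        simpa [Matrix.vecMul, dotProduct] using this
      have hlt : ∀ j, w j ≠ 0 → (w j).natDegree + 1 ≤ δ i := by
        intro j hj
        rcases Nat.lt_or_ge (w j).natDegree (δ i) with h' | h'
        · omega
        · exfalso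
          have hnd : (w j).natDegree = δ i := le_antisymm (hwdeg j) h'
          apply hj
          apply Polynomial.leadingCoeff_eq_zero.mp
          rw [← Polynomial.coeff_natDegree, hnd]
          exact hcoeff j
      obtain ⟨j1, hj1⟩ := Function.ne_iff.mp hwne
      simp only [Pi.zero_apply] at hj1
      have hδi1 : 1 ≤ δ i := by have := hlt j1 hj1; omega
      refine ⟨i, w, γ, hγi, hwalg, hδi1, ?_⟩
      intro j
      by_cases hj : w j = 0
      · rw [hj, Polynomial.natDegree_zero]; omega
      · have := hlt j hj; omega
  obtain ⟨i, w, γ, hγi, hvγ, hδ1, hwdeg⟩ := key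
  set B' := B.updateRow i w with hB'
  have hB'V : rowSpace B' = V := by
    rw [hB', rowSpace_updateRow B i w γ hγi hvγ]; exact hBV
  have hrow' : ∀ k, k ≠ i → rowDegNat B' k = rowDegNat B k := by
    intro k hk
    unfold rowDegNat
    apply Finset.sup_congr rfl
    intro j _
    rw [hB', Matrix.updateRow_ne hk]
  have hrowi : rowDegNat B' i ≤ δ i - 1 := by
    apply Finset.sup_le
    intro j _
    rw [hB', Matrix.updateRow_self]
    exact hwdeg j
  have hB'sum : (∑ k, rowDegNat B' k) < ∑ k, rowDegNat B k := by
    have e1 : ∑ k, rowDegNat B' k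
        = rowDegNat B' i + ∑ k ∈ Finset.univ.erase i, rowDegNat B' k :=
      (Finset.add_sum_erase _ _ (Finset.mem_univ i)).symm
    have e2 : ∑ k, rowDegNat B k
        = rowDegNat B i + ∑ k ∈ Finset.univ.erase i, rowDegNat B k :=
      (Finset.add_sum_erase _ _ (Finset.mem_univ i)).symm
    have e3 : ∑ k ∈ Finset.univ.erase i, rowDegNat B' k
        = ∑ k ∈ Finset.univ.erase i, rowDegNat B k :=
      Finset.sum_congr rfl fun k hk => hrow' k (Finset.ne_of_mem_erase hk)
    rw [e1, e2, e3]
    have : rowDegNat B i = δ i := rfl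
    omega
  exact IH (∑ k, rowDegNat B' k) (lt_of_lt_of_le hB'sum hBN) B' le_rfl hB'V

end MinBasisExist

section Glue

theorem matDeg_le {p q : ℕ} {P : Matrix (Fin p) (Fin q) ℂ[X]} {d : ℕ}
    (h : ∀ i j, (P i j).degree ≤ (d : WithBot ℕ)) : matDeg P ≤ (d : WithBot ℕ) :=
  Finset.sup_le fun i _ => Finset.sup_le fun j _ => h i j

theorem le_matDeg {p q : ℕ} (P : Matrix (Fin p) (Fin q) ℂ[X]) (i : Fin p) (j : Fin q) :
    (P i j).degree ≤ matDeg P :=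
  le_trans (Finset.le_sup (f := fun j => (P i j).degree) (Finset.mem_univ j))
    (Finset.le_sup (f := fun i => Finset.univ.sup fun j => (P i j).degree)
      (Finset.mem_univ i))

theorem exists_entry_ne_zero_of_rank {p q r0 : ℕ} {M : Matrix (Fin p) (Fin q) ℂ}
    (h : M.rank = r0) (hr : 0 < r0) : ∃ i j, M i j ≠ 0 := by
  by_contra hno
  push_neg at hno
  have hM : M = 0 := Matrix.ext fun i j => hno i j
  rw [hM, Matrix.rank_zero] at h
  omega

theorem map_eval_mul {p q s : ℕ} (A : Matrix (Fin p) (Fin q) ℂ[X])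
    (B : Matrix (Fin q) (Fin s) ℂ[X]) (x : ℂ) :
    (A * B).map (fun f => f.eval x)
      = (A.map fun f => f.eval x) * (B.map fun f => f.eval x) := by
  have h := Matrix.map_mul (L := A) (M := B) (f := Polynomial.evalRingHom x)
  simpa only [Polynomial.coe_evalRingHom] using h

theorem toRat_one {r0 : ℕ} : toRat (1 : Matrix (Fin r0) (Fin r0) ℂ[X]) = 1 :=
  Matrix.map_one _ (map_zero _) (map_one _)

theorem coeff_d_factor {m r n d : ℕ} (L : Matrix (Fin m) (Fin r) ℂ[X])
    (R : Matrix (Fin r) (Fin n) ℂ[X]) (cdeg ρ : Fin r → ℕ)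
    (hLdeg : ∀ k i, (L k i).degree ≤ (cdeg i : WithBot ℕ))
    (hRdeg : ∀ i j, (R i j).degree ≤ (ρ i : WithBot ℕ))
    (hsum : ∀ i, cdeg i + ρ i = d ∨ ∀ k, L k i = 0) :
    (Matrix.of fun k j => ((L * R) k j).coeff d)
      = (Matrix.of fun k i => (L k i).coeff (cdeg i))
        * (Matrix.of fun i j => (R i j).coeff (ρ i)) := by
  refine Matrix.ext fun k j => ?_
  show ((L * R) k j).coeff d
      = ∑ i, (L k i).coeff (cdeg i) * (R i j).coeff (ρ i)
  rw [Matrix.mul_apply, Polynomial.finset_sum_coeff]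
  refine Finset.sum_congr rfl fun i _ => ?_
  rcases hsum i with h | h
  · rw [← h, coeff_mul_of_degree_le (hLdeg k i) (hRdeg i j)]
  · rw [h k]
    simp

end Glue

/-- Characterization of the polynomial matrices with the generic complete eigenstructure
K_a, i.e. of orb(K_a): P has normal rank r, degree exactly d, no finite or infinite
eigenvalues (w.r.t. grade d) and prescribed minimal indices of its left and right
nullspaces, if and only if P = L R with L and R dual minimal bases with the prescribed
minimal indices of their nullspaces and matching column/row degrees summing to d. -/
theorem orbit_Ka_characterization
    {m n r d a : ℕ}
    (hm : 2 ≤ m) (hn : 2 ≤ n) (hd : 1 ≤ d) (hr0 : 0 < r) (hrm : r < m) (hrn : r < n)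
    (ha : a ≤ r * d)
    (P : Matrix (Fin m) (Fin n) ℂ[X])
    (hPdeg : ∀ i j, (P i j).degree ≤ (d : WithBot ℕ)) :
    (normalRank P = r ∧ matDeg P = (d : WithBot ℕ) ∧
      (∀ x : ℂ, (P.map (fun q => q.eval x)).rank = r) ∧
      (Matrix.of (fun (i : Fin m) (j : Fin n) => (P i j).coeff d) :
        Matrix (Fin m) (Fin n) ℂ).rank = r ∧
      HasMinIndices (leftNull P)
        (Multiset.replicate ((r * d - a) % (m - r)) ((r * d - a) / (m - r) + 1) +
         Multiset.replicate ((m - r) - (r * d - a) % (m - r)) ((r * d - a) / (m - r))) ∧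
      HasMinIndices (rightNull P)
        (Multiset.replicate (a % (n - r)) (a / (n - r) + 1) +
         Multiset.replicate ((n - r) - a % (n - r)) (a / (n - r))))
    ↔
    (∃ (L : Matrix (Fin m) (Fin r) ℂ[X]) (R : Matrix (Fin r) (Fin n) ℂ[X]),
      P = L * R ∧ IsMinimalColBasisC L ∧ IsMinimalRowBasisC R ∧
      HasMinIndices (leftNull L)
        (Multiset.replicate ((r * d - a) % (m - r)) ((r * d - a) / (m - r) + 1) +
         Multiset.replicate ((m - r) - (r * d - a) % (m - r)) ((r * d - a) / (m - r))) ∧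
      HasMinIndices (rightNull R)
        (Multiset.replicate (a % (n - r)) (a / (n - r) + 1) +
         Multiset.replicate ((n - r) - a % (n - r)) (a / (n - r))) ∧
      ∀ i : Fin r, colDeg L i + rowDeg R i = (d : WithBot ℕ)) := by
  constructor
  · -- forward direction: construct the factorization
    rintro ⟨hnr, hdegP, hev, hinf, hLN, hRN⟩
    have hfr : Module.finrank (RatFunc ℂ) (rowSpace P) = r := by
      rw [finrank_rowSpace]; exact hnr
    obtain ⟨R, hRmin, hRV⟩ := exists_minimal_row_basis (rowSpace P) hfr
    obtain ⟨hRev, hRred⟩ := hRmin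
    have hRrk : (toRat R).rank = r := by
      rw [← finrank_rowSpace, hRV]; exact hfr
    obtain ⟨Xi, hXi⟩ := exists_right_inverse hRev
    have hrows : ∀ k, toRat P k ∈ rowSpace R := fun k => by
      rw [hRV]; exact row_mem_rowSpace P k
    choose Y hY using hrows
    have hYR : (Matrix.of Y) * toRat R = toRat P := by
      refine Matrix.ext fun k j => ?_
      have := congrFun (hY k) j
      rw [Matrix.mulVecLin_apply] at this
      rw [Matrix.mul_apply, ← this]
      simp [Matrix.mulVec, dotProduct, Matrix.transpose_apply, mul_comm]
    set L : Matrix (Fin m) (Fin r) ℂ[X] := P * Xi with hL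
    have h1 : toRat R * toRat Xi = 1 := by
      rw [← toRat_mul, hXi, toRat_one]
    have hPLR : P = L * R := by
      apply toRat_inj
      rw [toRat_mul, hL, toRat_mul]
      rw [← hYR, Matrix.mul_assoc (Matrix.of Y) (toRat R) (toRat Xi), h1, Matrix.mul_one]
    set ρ : Fin r → ℕ := rowDegNat R with hρ
    have hPDP : ∀ (k : Fin m) (i : Fin r), L k i ≠ 0 →
        (L k i).natDegree + ρ i ≤ d := by
      intro k
      apply predictable_degree hRred L k d
      intro j
      rw [← hPLR]
      exact hPdeg k j
    set cdeg : Fin r → ℕ := fun i => d - ρ i with hcdeg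
    have hLdeg : ∀ k i, (L k i).degree ≤ (cdeg i : WithBot ℕ) := by
      intro k i
      by_cases h0 : L k i = 0
      · rw [h0, Polynomial.degree_zero]; exact bot_le
      · have := hPDP k i h0
        calc (L k i).degree ≤ ((L k i).natDegree : WithBot ℕ) :=
              Polynomial.degree_le_natDegree
          _ ≤ (cdeg i : WithBot ℕ) := by
              have hre : cdeg i = d - ρ i := rfl
              have hle : (L k i).natDegree ≤ cdeg i := by omega
              exact_mod_cast hle
    have hsum' : ∀ i, cdeg i + ρ i = d ∨ ∀ k, L k i = 0 := by
      intro i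
      by_cases hex : ∃ k, L k i ≠ 0
      · left
        obtain ⟨k, hk⟩ := hex
        have := hPDP k i hk
        have hre : cdeg i = d - ρ i := rfl
        omega
      · right
        push_neg at hex
        exact hex
    set C : Matrix (Fin m) (Fin r) ℂ := Matrix.of (fun k i => (L k i).coeff (cdeg i))
      with hC
    have hfact := coeff_d_factor L R cdeg ρ hLdeg
      (fun i j => degree_le_coe_rowDegNat R i j) hsum'
    rw [hPLR] at hinf
    rw [hfact] at hinf
    have hCrank : C.rank = r := by
      apply le_antisymm
      · simpa using Matrix.rank_le_card_width C
      · have h2 := Matrix.rank_mul_le_left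
          (Matrix.of fun k i => (L k i).coeff (cdeg i))
          (Matrix.of fun i j => (R i j).coeff (ρ i))
        rw [hinf] at h2
        exact h2
    have hcolsC : ∀ i, ∃ k, C k i ≠ 0 := by
      intro i
      by_contra hno
      push_neg at hno
      have hz : C *ᵥ (Pi.single i 1 : Fin r → ℂ) = 0 := by
        funext k
        have he : (C *ᵥ (Pi.single i 1 : Fin r → ℂ)) k = C k i := by
          simp [Matrix.mulVec, dotProduct, Pi.single_apply, mul_ite, mul_one,
            mul_zero, Finset.sum_ite_eq']
        rw [he, hno k]
        simp
      have := mulVec_eq_zero hCrank hz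
      simpa using congrFun this i
    have hLcolne : ∀ i, ∃ k, L k i ≠ 0 := by
      intro i
      obtain ⟨k, hk⟩ := hcolsC i
      exact ⟨k, fun h0 => hk (by rw [hC]; simp [h0])⟩
    have hρled : ∀ i, ρ i ≤ d := by
      intro i
      obtain ⟨k, hk⟩ := hLcolne i
      have := hPDP k i hk
      omega
    have hcdnat : ∀ i, colDegNat L i = cdeg i := by
      intro i
      apply le_antisymm
      · apply Finset.sup_le
        intro k _
        by_cases h0 : L k i = 0
        · rw [h0, Polynomial.natDegree_zero]; omega
        · have hd := hLdeg k i
          rw [Polynomial.degree_eq_natDegree h0] at hd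
          exact_mod_cast hd
      · obtain ⟨k, hk⟩ := hcolsC i
        have hk' : (L k i).coeff (cdeg i) ≠ 0 := hk
        exact le_trans (Polynomial.le_natDegree_of_ne_zero hk')
          (natDegree_le_colDegNat L k i)
    have hhc : hcMatrix L = C := by
      refine Matrix.ext fun k i => ?_
      show (L k i).coeff (colDegNat L i) = (L k i).coeff (cdeg i)
      rw [hcdnat i]
    have hRrowne : ∀ i, ∃ j, R i j ≠ 0 := by
      intro i
      by_contra hno
      push_neg at hno
      have hz : (Pi.single i 1 : Fin r → RatFunc ℂ) ᵥ* toRat R = 0 := by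
        funext j
        have he : ((Pi.single i 1 : Fin r → RatFunc ℂ) ᵥ* toRat R) j = toRat R i j := by
          simp [Matrix.vecMul, dotProduct, Pi.single_apply, ite_mul, one_mul,
            zero_mul, Finset.sum_ite_eq]
        rw [he]
        show algebraMap ℂ[X] (RatFunc ℂ) (R i j) = (0 : Fin n → RatFunc ℂ) j
        rw [hno j]
        simp
      have := vecMul_eq_zero hRrk hz
      simpa using congrFun this i
    refine ⟨L, R, hPLR, ⟨?_, ?_⟩, ⟨hRev, hRred⟩, ?_, ?_, ?_⟩
    · -- evals of L full column rank
      intro x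
      apply le_antisymm
      · simpa using Matrix.rank_le_card_width (L.map fun q => q.eval x)
      · have hPx := hev x
        rw [hPLR, map_eval_mul] at hPx
        have h2 := Matrix.rank_mul_le_left (L.map fun q => q.eval x)
          (R.map fun q => q.eval x)
        rw [hPx] at h2
        exact h2
    · -- column reduced
      show (hcMatrix L).rank = r
      rw [hhc]
      exact hCrank
    · -- left minimal indices
      rw [hPLR, leftNull_mul_right hRrk] at hLN
      exact hLN
    · -- right minimal indices
      rw [rightNull_eq_of_rowSpace_eq hRV]
      exact hRN
    · -- degree sums
      intro i
      rw [colDeg_eq_coe (hLcolne i), rowDeg_eq_coe (hRrowne i), hcdnat i]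
      have hps : cdeg i + ρ i = d := by
        have hre : cdeg i = d - ρ i := rfl
        have := hρled i
        omega
      rw [show ((rowDegNat R i : ℕ) : WithBot ℕ) = (ρ i : WithBot ℕ) from rfl]
      rw [← Nat.cast_add, hps]
  · -- reverse direction
    rintro ⟨L, R, hPLR, ⟨hLev, hLred⟩, ⟨hRev, hRred⟩, hLN, hRN, hdeg⟩
    have hLrk : (toRat L).rank = r := rank_toRat_of_eval_col L 0 (hLev 0)
    have hRrk : (toRat R).rank = r := rank_toRat_of_eval_row R 0 (hRev 0)
    have hkey : ∀ i : Fin r, (∃ k, L k i ≠ 0) ∧ (∃ j, R i j ≠ 0) ∧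
        colDegNat L i + rowDegNat R i = d := by
      intro i
      have hd := hdeg i
      have hex1 : ∃ k, L k i ≠ 0 := by
        by_contra hno
        push_neg at hno
        have hbot : colDeg L i = ⊥ := by
          apply le_bot_iff.mp
          apply Finset.sup_le
          intro k _
          rw [hno k, Polynomial.degree_zero]
        rw [hbot] at hd
        simp at hd
      have hex2 : ∃ j, R i j ≠ 0 := by
        by_contra hno
        push_neg at hno
        have hbot : rowDeg R i = ⊥ := by
          apply le_bot_iff.mp
          apply Finset.sup_le
          intro j _
          rw [hno j, Polynomial.degree_zero]
        rw [hbot] at hd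
        simp at hd
      refine ⟨hex1, hex2, ?_⟩
      rw [colDeg_eq_coe hex1, rowDeg_eq_coe hex2, ← Nat.cast_add] at hd
      exact_mod_cast hd
    have hfact := coeff_d_factor L R (colDegNat L) (rowDegNat R)
      (fun k i => degree_le_coe_colDegNat L k i)
      (fun i j => degree_le_coe_rowDegNat R i j)
      (fun i => Or.inl (hkey i).2.2)
    have hinfrank : (Matrix.of fun i j => ((P i j).coeff d) :
        Matrix (Fin m) (Fin n) ℂ).rank = r := by
      rw [hPLR, hfact]
      have h1 : (Matrix.of fun k i => (L k i).coeff (colDegNat L i)).rank = r := hLred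
      have h2 : (Matrix.of fun i j => (R i j).coeff (rowDegNat R i)).rank = r := hRred
      rw [rank_mul_right_of_full_col h1 _, h2]
    refine ⟨?_, ?_, ?_, hinfrank, ?_, ?_⟩
    · -- normal rank
      show (toRat P).rank = r
      rw [hPLR, toRat_mul, rank_mul_right_of_full_col hLrk, hRrk]
    · -- degree exactly d
      apply le_antisymm (matDeg_le hPdeg)
      obtain ⟨i, j, hij⟩ := exists_entry_ne_zero_of_rank hinfrank hr0
      calc (d : WithBot ℕ) ≤ (P i j).degree := Polynomial.le_degree_of_ne_zero hij
        _ ≤ matDeg P := le_matDeg P i j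
    · -- eval ranks
      intro x
      rw [hPLR, map_eval_mul, rank_mul_right_of_full_col (hLev x), hRev x]
    · -- left minimal indices
      rw [hPLR, leftNull_mul_right hRrk]
      exact hLN
    · -- right minimal indices
      rw [hPLR, rightNull_mul_left hLrk]
      exact hRN
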